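/- Suppose E(Y^a | L=l) = Σ_{a''∈𝒜} E(Y^a | A=a'', L=l)·P(A=a''|L=l), with all E(Y^a | A=a'', L=l) ∈ [0,1], E(Y^a|A=a,L=l) = E(Y|A=a,L=l), P(A=a'|L=l) > 0, and the probabilities summing to 1. Then for a ≠ a': (E(Y^a|L=l) - E(Y|A=a,L=l)·P(A=a|L=l) + P(A=a|L=l) + P(A=a'|L=l) - 1)/P(A=a'|L=l) ≤ E(Y^a | A=a', L=l) ≤ (E(Y^a|L=l) - E(Y|A=a,L=l)·P(A=a|L=l))/P(A=a'|L=l). -/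
import Mathlib


/-- Bounds on `E(Y^a | A=a', L=l)` for countable (more than binary) treatment. -/
theorem stmt_9 {α : Type*} [Countable α] (E P : α → ℝ) (a a' : α) (EYa_l c : ℝ)
    (hne : a ≠ a')
    (hEbd : ∀ x, 0 ≤ E x ∧ E x ≤ 1)
    (hPnn : ∀ x, 0 ≤ P x)
    (hPsummable : Summable P) (hPsum : ∑' x, P x = 1)
    (hEsummable : Summable (fun x => E x * P x))
    (htot : EYa_l = ∑' x, E x * P x)
    (hconsist : E a = c)
    (hpos : 0 < P a') :
    (EYa_l - c * P a + P a + P a' - 1) / P a' ≤ E a' ∧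
      E a' ≤ (EYa_l - c * P a) / P a' := by
  classical
  subst hconsist htot
  have hfnn : ∀ x, 0 ≤ E x * P x := fun x => mul_nonneg (hEbd x).1 (hPnn x)
  -- upper bound: E a * P a + E a' * P a' ≤ tsum
  have hub : E a * P a + E a' * P a' ≤ ∑' x, E x * P x := by
    have := Summable.sum_le_tsum ({a, a'} : Finset α) (fun x _ => hfnn x) hEsummable
    rwa [Finset.sum_pair hne] at this
  -- lower bound via g x = (1 - E x) * P x
  have hgsummable : Summable (fun x => P x - E x * P x) := hPsummable.sub hEsummable
  have hgnn : ∀ x, 0 ≤ P x - E x * P x := by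
    intro x
    have : E x * P x ≤ 1 * P x := mul_le_mul_of_nonneg_right (hEbd x).2 (hPnn x)
    linarith
  have hgsum : ∑' x, (P x - E x * P x) = 1 - ∑' x, E x * P x := by
    rw [Summable.tsum_sub hPsummable hEsummable, hPsum]
  have hlb : (P a - E a * P a) + (P a' - E a' * P a') ≤ 1 - ∑' x, E x * P x := by
    have := Summable.sum_le_tsum ({a, a'} : Finset α) (fun x _ => hgnn x) hgsummable
    rwa [Finset.sum_pair hne, hgsum] at this
  constructor
  · rw [div_le_iff₀ hpos]; linarith
  · rw [le_div_iff₀ hpos]; linarith
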